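/- Let n ≥ 1 and p_1,…,p_n ∈ (0,1). Then for every permutation σ of {1,…,n}, Σ_{t=1}^{n} ((1 − p_{σ(t)})/p_{σ(t)}) · ∏_{l=1}^{t} p_{σ(l)} = 1 − ∏_{i=1}^{n} p_i. (This shows that the Hider strategy choosing vertex i with probability proportional to (1−p_i)/p_i equalizes the expected payoff over all search orders, and yields the value (1 − ∏_i p_i)/Σ_i (1−p_i)/p_i of the one-target search and rescue game with no graph structure.) -/

import Mathlib

/-- The equalizing property of the one-target Hider strategy in the unstructured
search and rescue game: for any search order `σ` of the `n` locations (position `t`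
searches location `σ t`),
`Σ_t ((1 - p (σ t)) / p (σ t)) · Π_{l ≤ t} p (σ l) = 1 - Π_i p i`. -/
theorem hider_equalizing_one_target (n : ℕ) (hn : 1 ≤ n)
    (p : Fin n → ℝ) (hp : ∀ i, 0 < p i ∧ p i < 1) (σ : Equiv.Perm (Fin n)) :
    ∑ t : Fin n, ((1 - p (σ t)) / p (σ t)) *
      ∏ l ∈ Finset.univ.filter (fun l : Fin n => l ≤ t), p (σ l) =
    1 - ∏ i, p i := by
  set f : ℕ → ℝ := fun k =>
    ∏ l ∈ Finset.univ.filter (fun l : Fin n => (l : ℕ) < k), p (σ l) with hf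
  have hstep : ∀ t : Fin n, f ((t : ℕ) + 1) = f (t : ℕ) * p (σ t) := by
    intro t
    have hset : Finset.univ.filter (fun l : Fin n => (l : ℕ) < (t : ℕ) + 1) =
        insert t (Finset.univ.filter (fun l : Fin n => (l : ℕ) < (t : ℕ))) := by
      ext l
      simp only [Finset.mem_filter, Finset.mem_insert, Finset.mem_univ, true_and, Fin.ext_iff]
      omega
    have hnotmem : t ∉ Finset.univ.filter (fun l : Fin n => (l : ℕ) < (t : ℕ)) := by
      simp
    simp only [hf, hset, Finset.prod_insert hnotmem]
    ring
  have hterm : ∀ t : Fin n,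
      ((1 - p (σ t)) / p (σ t)) *
        ∏ l ∈ Finset.univ.filter (fun l : Fin n => l ≤ t), p (σ l)
      = f (t : ℕ) - f ((t : ℕ) + 1) := by
    intro t
    have hle : Finset.univ.filter (fun l : Fin n => l ≤ t) =
        Finset.univ.filter (fun l : Fin n => (l : ℕ) < (t : ℕ) + 1) := by
      ext l
      simp only [Finset.mem_filter, Finset.mem_univ, true_and, Fin.le_iff_val_le_val]
      omega
    rw [hle]
    have hp0 : p (σ t) ≠ 0 := ne_of_gt (hp (σ t)).1
    have : (∏ l ∈ Finset.univ.filter (fun l : Fin n => (l : ℕ) < (t : ℕ) + 1), p (σ l))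
        = f ((t : ℕ) + 1) := rfl
    rw [this, hstep t]
    field_simp
  rw [Finset.sum_congr rfl (fun t _ => hterm t)]
  have htel : ∑ t : Fin n, (f (t : ℕ) - f ((t : ℕ) + 1)) = f 0 - f n := by
    rw [Fin.sum_univ_eq_sum_range (fun k => f k - f (k + 1))]
    exact Finset.sum_range_sub' f n
  rw [htel]
  have h0 : f 0 = 1 := by
    simp [hf]
  have hn' : f n = ∏ i, p i := by
    have : Finset.univ.filter (fun l : Fin n => (l : ℕ) < n) = Finset.univ := by
      ext l; simp [l.isLt]
    simp only [hf, this]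
    exact Equiv.prod_comp σ p
  rw [h0, hn']
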